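/- Let Θ = U D V^T be the singular value decomposition of a rank-r matrix Θ ∈ ℝ^{d1×d2}, with U ∈ ℝ^{d1×r}, V ∈ ℝ^{d2×r} having orthonormal columns and D invertible diagonal with positive entries. Define the tangent-space projection P_T M = U U^T M + M V V^T − U U^T M V V^T. Then for any matrix M ∈ ℝ^{d1×d2}: 0 ≤ ‖M‖_N − ‖Θ‖_N − ‖(I−P_T)M‖_N − ⟨U V^T, M − Θ⟩ ≤ ‖(P_T M − Θ) V D^{−1/2}‖_F² + ‖D^{−1/2} U^T (P_T M − Θ)‖_F². -/

import Mathlib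

open Matrix

noncomputable def frobNorm {m n : ℕ} (M : Matrix (Fin m) (Fin n) ℝ) : ℝ :=
  Real.sqrt (Matrix.trace (Mᵀ * M))

noncomputable def nuclearNorm {m n : ℕ} (M : Matrix (Fin m) (Fin n) ℝ) : ℝ :=
  ∑ i, Real.sqrt ((show (Mᵀ * M).IsHermitian by
    simpa [Matrix.conjTranspose_eq_transpose_of_trivial] using Matrix.isHermitian_conjTranspose_mul_self M).eigenvalues i)

noncomputable def spectralNorm' {m n : ℕ} (M : Matrix (Fin m) (Fin n) ℝ) : ℝ :=
  ⨆ i, Real.sqrt ((show (Mᵀ * M).IsHermitian by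
    simpa [Matrix.conjTranspose_eq_transpose_of_trivial] using Matrix.isHermitian_conjTranspose_mul_self M).eigenvalues i)

noncomputable def mip {m n : ℕ} (A B : Matrix (Fin m) (Fin n) ℝ) : ℝ :=
  Matrix.trace (Aᵀ * B)

namespace NNaux
variable {m n : ℕ} (A : Matrix (Fin m) (Fin n) ℝ)

lemma hermT : (Aᵀ * A).IsHermitian := by
  simpa [Matrix.conjTranspose_eq_transpose_of_trivial] using Matrix.isHermitian_conjTranspose_mul_self A

noncomputable def lam : Fin n → ℝ := (hermT A).eigenvalues
noncomputable def sig (i : Fin n) : ℝ := Real.sqrt (lam A i)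
noncomputable def P : Matrix (Fin n) (Fin n) ℝ :=
  ((hermT A).eigenvectorUnitary : Matrix (Fin n) (Fin n) ℝ)

lemma lam_nonneg (i : Fin n) : 0 ≤ lam A i :=
  Matrix.eigenvalues_conjTranspose_mul_self_nonneg A i

lemma PtP : (P A)ᵀ * P A = 1 := by
  have := (Matrix.mem_unitaryGroup_iff').mp
    ((hermT A).eigenvectorUnitary).2
  simpa [P, Matrix.star_eq_conjTranspose, Matrix.conjTranspose_eq_transpose_of_trivial] using this

lemma PPt : P A * (P A)ᵀ = 1 := by
  have := (Matrix.mem_unitaryGroup_iff).mp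
    ((hermT A).eigenvectorUnitary).2
  simpa [P, Matrix.star_eq_conjTranspose, Matrix.conjTranspose_eq_transpose_of_trivial] using this

lemma spec : Aᵀ * A = P A * Matrix.diagonal (lam A) * (P A)ᵀ := by
  have h := (hermT A).spectral_theorem
  simpa [P, lam, Matrix.star_eq_conjTranspose, Matrix.conjTranspose_eq_transpose_of_trivial,
    Function.comp] using h

end NNaux

namespace X
variable {m n : ℕ} (A : Matrix (Fin m) (Fin n) ℝ)
open NNaux

noncomputable def Uh : Matrix (Fin m) (Fin n) ℝ :=
  A * P A * Matrix.diagonal (fun i => (sig A i)⁻¹)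

lemma spec' : Aᵀ * A * P A = P A * Matrix.diagonal (lam A) := by
  rw [spec A, Matrix.mul_assoc, Matrix.mul_assoc, PtP, Matrix.mul_one]

lemma sig_sq (i : Fin n) : sig A i * sig A i = lam A i :=
  Real.mul_self_sqrt (lam_nonneg A i)

lemma UhtUh : (Uh A)ᵀ * Uh A =
    Matrix.diagonal (fun i => (sig A i)⁻¹ * (lam A i * (sig A i)⁻¹)) := by
  simp only [Uh, Matrix.transpose_mul, Matrix.diagonal_transpose]
  calc (Matrix.diagonal fun i => (sig A i)⁻¹) * ((P A)ᵀ * Aᵀ) *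
      (A * P A * Matrix.diagonal fun i => (sig A i)⁻¹)
      = Matrix.diagonal (fun i => (sig A i)⁻¹) * ((P A)ᵀ * (Aᵀ * A * P A)) *
        Matrix.diagonal (fun i => (sig A i)⁻¹) := by
        simp only [Matrix.mul_assoc]
    _ = Matrix.diagonal (fun i => (sig A i)⁻¹) * Matrix.diagonal (lam A) *
        Matrix.diagonal (fun i => (sig A i)⁻¹) := by
        rw [spec', show (P A)ᵀ * (P A * Matrix.diagonal (lam A)) = Matrix.diagonal (lam A) by rw [← Matrix.mul_assoc, PtP, Matrix.one_mul]]
    _ = _ := by simp [Matrix.diagonal_mul_diagonal, mul_assoc]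

end X

namespace X
variable {m n : ℕ} (A : Matrix (Fin m) (Fin n) ℝ)
open NNaux

lemma sig_inv_mul_lam (i : Fin n) (h : lam A i = 0) : sig A i = 0 := by
  simp [sig, h]

lemma svd : Uh A * Matrix.diagonal (sig A) * (P A)ᵀ = A := by
  have hZ : A * P A * Matrix.diagonal (fun i => 1 - (sig A i)⁻¹ * sig A i) = 0 := by
    set Z := A * P A * Matrix.diagonal (fun i => 1 - (sig A i)⁻¹ * sig A i) with hZdef
    have h0 : Zᵀ * Z = 0 := by
      rw [hZdef]
      simp only [Matrix.transpose_mul, Matrix.diagonal_transpose]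
      calc (Matrix.diagonal fun i => 1 - (sig A i)⁻¹ * sig A i) * ((P A)ᵀ * Aᵀ) *
          (A * P A * Matrix.diagonal fun i => 1 - (sig A i)⁻¹ * sig A i)
          = (Matrix.diagonal fun i => 1 - (sig A i)⁻¹ * sig A i) * ((P A)ᵀ * (Aᵀ * A * P A)) *
            (Matrix.diagonal fun i => 1 - (sig A i)⁻¹ * sig A i) := by
            simp only [Matrix.mul_assoc]
        _ = (Matrix.diagonal fun i => 1 - (sig A i)⁻¹ * sig A i) * Matrix.diagonal (lam A) *
            (Matrix.diagonal fun i => 1 - (sig A i)⁻¹ * sig A i) := by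
            rw [spec', show (P A)ᵀ * (P A * Matrix.diagonal (lam A)) = Matrix.diagonal (lam A) by
              rw [← Matrix.mul_assoc, PtP, Matrix.one_mul]]
        _ = 0 := by
            simp only [Matrix.diagonal_mul_diagonal]
            rw [show (fun i => (1 - (sig A i)⁻¹ * sig A i) * lam A i *
                (1 - (sig A i)⁻¹ * sig A i)) = fun _ => (0:ℝ) from ?_, Matrix.diagonal_zero]
            funext i
            rcases eq_or_ne (sig A i) 0 with h | h
            · have : lam A i = 0 := by
                have := sig_sq A i; rw [h] at this; linarith
              simp [this]
            · simp [inv_mul_cancel₀ h]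
    have := Matrix.conjTranspose_mul_self_eq_zero (A := Z)
    rw [Matrix.conjTranspose_eq_transpose_of_trivial] at this
    exact this.mp h0
  have key : Uh A * Matrix.diagonal (sig A) = A * P A := by
    rw [Uh, Matrix.mul_assoc, Matrix.mul_assoc, Matrix.diagonal_mul_diagonal]
    have : A * P A * Matrix.diagonal (fun i => (sig A i)⁻¹ * sig A i) =
        A * P A * (1 : Matrix (Fin n) (Fin n) ℝ) - A * P A * Matrix.diagonal (fun i => 1 - (sig A i)⁻¹ * sig A i) := by
      rw [← Matrix.mul_sub]
      congr 1
      rw [← Matrix.diagonal_one]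
      rw [Matrix.diagonal_sub]
      exact congrArg _ (funext fun i => by ring)
    rw [← Matrix.mul_assoc, this, hZ, sub_zero, Matrix.mul_one]
  rw [key, Matrix.mul_assoc, PPt, Matrix.mul_one]

end X

namespace X
variable {m n : ℕ} (A : Matrix (Fin m) (Fin n) ℝ)
open NNaux

lemma psd_diag {k : ℕ} {M : Matrix (Fin k) (Fin k) ℝ} (h : M.PosSemidef) (i : Fin k) :
    0 ≤ M i i := by
  exact h.diag_nonneg

lemma trace_formula (G : Matrix (Fin m) (Fin n) ℝ) :
    Matrix.trace (Gᵀ * A) = ∑ i, ((G * P A)ᵀ * Uh A) i i * sig A i := by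
  conv_lhs => rw [← svd A]
  rw [show Gᵀ * (Uh A * Matrix.diagonal (sig A) * (P A)ᵀ)
      = Gᵀ * Uh A * Matrix.diagonal (sig A) * (P A)ᵀ by simp [Matrix.mul_assoc]]
  rw [Matrix.trace_mul_comm]
  rw [show (P A)ᵀ * (Gᵀ * Uh A * Matrix.diagonal (sig A))
      = ((G * P A)ᵀ * Uh A) * Matrix.diagonal (sig A) by
    simp [Matrix.transpose_mul, Matrix.mul_assoc]]
  rw [Matrix.trace]
  congr 1
  funext i
  simp [Matrix.diag, Matrix.mul_diagonal]

lemma dual_le (G : Matrix (Fin m) (Fin n) ℝ)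
    (hG : (1 - Gᵀ * G).PosSemidef) :
    Matrix.trace (Gᵀ * A) ≤ ∑ i, sig A i := by
  rw [trace_formula]
  apply Finset.sum_le_sum
  intro i _
  have hσ : 0 ≤ sig A i := Real.sqrt_nonneg _
  have hci : ((G * P A)ᵀ * Uh A) i i ≤ 1 := by
    have hcs : ∑ k, (G * P A) k i * Uh A k i ≤
        Real.sqrt (∑ k, ((G * P A) k i) ^ 2) * Real.sqrt (∑ k, (Uh A k i) ^ 2) :=
      Real.sum_mul_le_sqrt_mul_sqrt _ _ _
    have h1 : ∑ k, ((G * P A) k i) ^ 2 ≤ 1 := by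
      have hpsd : ((P A)ᵀ * (1 - Gᵀ * G) * P A).PosSemidef := by
        have := hG.mul_mul_conjTranspose_same ((P A)ᵀ)
        simpa [Matrix.conjTranspose_eq_transpose_of_trivial] using this
      have hd := psd_diag hpsd i
      have hexp : (P A)ᵀ * (1 - Gᵀ * G) * P A = 1 - (G * P A)ᵀ * (G * P A) := by
        rw [Matrix.mul_sub, Matrix.sub_mul, Matrix.mul_one, PtP]
        congr 1
        simp [Matrix.transpose_mul, Matrix.mul_assoc]
      rw [hexp] at hd
      have : ((G * P A)ᵀ * (G * P A)) i i = ∑ k, ((G * P A) k i) ^ 2 := by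
        simp [Matrix.mul_apply, Matrix.transpose_apply, sq, mul_comm]
      simp only [Matrix.sub_apply, Matrix.one_apply_eq] at hd
      linarith [hd, this ▸ hd]
    have h2 : ∑ k, (Uh A k i) ^ 2 ≤ 1 := by
      have : ((Uh A)ᵀ * Uh A) i i = ∑ k, (Uh A k i) ^ 2 := by
        simp [Matrix.mul_apply, Matrix.transpose_apply, sq]
      rw [UhtUh] at this
      simp only [Matrix.diagonal_apply_eq] at this
      rw [← this]
      rcases eq_or_ne (lam A i) 0 with h | h
      · simp [h]
      · have hl : 0 < lam A i := lt_of_le_of_ne (lam_nonneg A i) (Ne.symm h)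
        have hs : sig A i ≠ 0 := ne_of_gt (Real.sqrt_pos.mpr hl)
        rw [show (sig A i)⁻¹ * (lam A i * (sig A i)⁻¹) = lam A i / (sig A i * sig A i) by
          field_simp]
        rw [sig_sq, div_self h]
    have e1 : Real.sqrt (∑ k, ((G * P A) k i) ^ 2) ≤ 1 := by
      rw [show (1:ℝ) = Real.sqrt 1 by simp]
      exact Real.sqrt_le_sqrt (by simpa using h1)
    have e2 : Real.sqrt (∑ k, (Uh A k i) ^ 2) ≤ 1 := by
      rw [show (1:ℝ) = Real.sqrt 1 by simp]
      exact Real.sqrt_le_sqrt (by simpa using h2)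
    calc ((G * P A)ᵀ * Uh A) i i = ∑ k, (G * P A) k i * Uh A k i := by
          simp [Matrix.mul_apply, Matrix.transpose_apply, mul_comm]
      _ ≤ _ := hcs
      _ ≤ 1 * 1 := by
          exact mul_le_mul e1 e2 (Real.sqrt_nonneg _) zero_le_one
      _ = 1 := by ring
  calc ((G * P A)ᵀ * Uh A) i i * sig A i ≤ 1 * sig A i :=
        mul_le_mul_of_nonneg_right hci hσ
    _ = sig A i := one_mul _

end X

namespace X
variable {m n : ℕ} (A : Matrix (Fin m) (Fin n) ℝ)
open NNaux

lemma nuclear_eq : nuclearNorm A = ∑ i, sig A i := rfl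

lemma nuclear_nonneg : 0 ≤ nuclearNorm A :=
  Finset.sum_nonneg fun i _ => Real.sqrt_nonneg _

lemma dual_le' (G : Matrix (Fin m) (Fin n) ℝ) (hG : (1 - Gᵀ * G).PosSemidef) :
    Matrix.trace (Gᵀ * A) ≤ nuclearNorm A := dual_le A G hG

noncomputable def E (i : Fin n) : ℝ := if lam A i = 0 then 0 else 1

lemma E_eq (i : Fin n) : (sig A i)⁻¹ * (lam A i * (sig A i)⁻¹) = E A i := by
  unfold E
  rcases eq_or_ne (lam A i) 0 with h | h
  · simp [h]
  · have hl : 0 < lam A i := lt_of_le_of_ne (lam_nonneg A i) (Ne.symm h)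
    have hs : sig A i ≠ 0 := ne_of_gt (Real.sqrt_pos.mpr hl)
    rw [if_neg h, show (sig A i)⁻¹ * (lam A i * (sig A i)⁻¹)
      = lam A i / (sig A i * sig A i) by field_simp]
    rw [sig_sq, div_self h]

lemma UhtUh' : (Uh A)ᵀ * Uh A = Matrix.diagonal (E A) := by
  rw [UhtUh]
  exact congrArg _ (funext fun i => E_eq A i)

noncomputable def Gd : Matrix (Fin m) (Fin n) ℝ := Uh A * (P A)ᵀ

lemma GdtGd : (Gd A)ᵀ * Gd A = P A * Matrix.diagonal (E A) * (P A)ᵀ := by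
  unfold Gd
  calc (Uh A * (P A)ᵀ)ᵀ * (Uh A * (P A)ᵀ)
      = P A * ((Uh A)ᵀ * Uh A) * (P A)ᵀ := by
        simp [Matrix.transpose_mul, Matrix.mul_assoc]
    _ = _ := by rw [UhtUh']

lemma Gd_psd : (1 - (Gd A)ᵀ * Gd A).PosSemidef := by
  rw [GdtGd]
  have h1 : (1 : Matrix (Fin n) (Fin n) ℝ) - P A * Matrix.diagonal (E A) * (P A)ᵀ
      = P A * Matrix.diagonal (fun i => 1 - E A i) * (P A)ᵀ := by
    have : (Matrix.diagonal (fun i => 1 - E A i) : Matrix (Fin n) (Fin n) ℝ)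
        = 1 - Matrix.diagonal (E A) := by
      rw [← Matrix.diagonal_one, ← Matrix.diagonal_sub]
    rw [this, Matrix.mul_sub, Matrix.sub_mul, Matrix.mul_one, PPt]
  rw [h1]
  have hd : (Matrix.diagonal (fun i => 1 - E A i)).PosSemidef := by
    apply Matrix.PosSemidef.diagonal
    intro i
    unfold E
    rcases eq_or_ne (lam A i) 0 with h | h <;> simp [h]
  have := hd.mul_mul_conjTranspose_same (P A)
  simpa [Matrix.conjTranspose_eq_transpose_of_trivial] using this

lemma trace_Gd : Matrix.trace ((Gd A)ᵀ * A) = nuclearNorm A := by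
  rw [trace_formula, nuclear_eq]
  apply Finset.sum_congr rfl
  intro i _
  have hGP : Gd A * P A = Uh A := by
    rw [Gd, Matrix.mul_assoc, PtP, Matrix.mul_one]
  rw [hGP, UhtUh']
  simp only [Matrix.diagonal_apply_eq]
  unfold E
  rcases eq_or_ne (lam A i) 0 with h | h
  · simp [h, sig, Real.sqrt_eq_zero', le_of_eq h.symm]
  · simp [h]

lemma nuclear_triangle (B : Matrix (Fin m) (Fin n) ℝ) :
    nuclearNorm (A + B) ≤ nuclearNorm A + nuclearNorm B := by
  have h := trace_Gd (A + B)
  rw [Matrix.mul_add, Matrix.trace_add] at h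
  have h1 := dual_le' A (Gd (A + B)) (Gd_psd (A + B))
  have h2 := dual_le' B (Gd (A + B)) (Gd_psd (A + B))
  linarith

end X

namespace X
open NNaux
variable {m n p : ℕ}

lemma trace_psd_nonneg {k : ℕ} {M : Matrix (Fin k) (Fin k) ℝ} (h : M.PosSemidef) :
    0 ≤ Matrix.trace M :=
  Finset.sum_nonneg fun i _ => psd_diag h i

lemma trace_transpose_mul_self (M : Matrix (Fin m) (Fin n) ℝ) :
    Matrix.trace (Mᵀ * M) = ∑ j, ∑ i, M i j ^ 2 := by
  rw [Matrix.trace]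
  apply Finset.sum_congr rfl
  intro j _
  simp [Matrix.diag, Matrix.mul_apply, sq]

lemma trace_transpose_mul_self_nonneg (M : Matrix (Fin m) (Fin n) ℝ) :
    0 ≤ Matrix.trace (Mᵀ * M) := by
  rw [trace_transpose_mul_self]
  positivity

lemma frob_nonneg (M : Matrix (Fin m) (Fin n) ℝ) : 0 ≤ frobNorm M := Real.sqrt_nonneg _

lemma frob_sq (M : Matrix (Fin m) (Fin n) ℝ) :
    frobNorm M ^ 2 = Matrix.trace (Mᵀ * M) :=
  Real.sq_sqrt (trace_transpose_mul_self_nonneg M)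

lemma frob_transpose (M : Matrix (Fin m) (Fin n) ℝ) : frobNorm Mᵀ = frobNorm M := by
  unfold frobNorm
  rw [Matrix.transpose_transpose, Matrix.trace_mul_comm]

lemma Uh_mul_E (A : Matrix (Fin m) (Fin n) ℝ) :
    Uh A * Matrix.diagonal (E A) = Uh A := by
  funext k i
  rw [Matrix.mul_diagonal]
  unfold E
  rcases eq_or_ne (lam A i) 0 with h | h
  · have hσ : sig A i = 0 := by simp [sig, h]
    have : Uh A k i = 0 := by
      rw [Uh, Matrix.mul_diagonal, hσ]
      simp
    simp [h, this]
  · simp [h]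

lemma proj_psd (A : Matrix (Fin m) (Fin n) ℝ) :
    (1 - Uh A * (Uh A)ᵀ).PosSemidef := by
  set S := (1 : Matrix (Fin m) (Fin m) ℝ) - Uh A * (Uh A)ᵀ with hS
  have hsymm : Sᵀ = S := by
    rw [hS]
    simp [Matrix.transpose_sub, Matrix.transpose_mul]
  have hQQ : (Uh A * (Uh A)ᵀ) * (Uh A * (Uh A)ᵀ) = Uh A * (Uh A)ᵀ := by
    calc (Uh A * (Uh A)ᵀ) * (Uh A * (Uh A)ᵀ)
        = Uh A * ((Uh A)ᵀ * Uh A) * (Uh A)ᵀ := by simp [Matrix.mul_assoc]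
      _ = Uh A * Matrix.diagonal (E A) * (Uh A)ᵀ := by rw [UhtUh']
      _ = _ := by rw [Uh_mul_E]
  have hidem : S * S = S := by
    rw [hS]
    simp only [Matrix.mul_sub, Matrix.sub_mul, Matrix.mul_one, Matrix.one_mul, hQQ]
    abel
  have := Matrix.posSemidef_conjTranspose_mul_self S
  rw [Matrix.conjTranspose_eq_transpose_of_trivial, hsymm, hidem] at this
  exact this

lemma trace_proj_le (A : Matrix (Fin m) (Fin n) ℝ) (X : Matrix (Fin m) (Fin p) ℝ) :
    Matrix.trace (Xᵀ * (Uh A * (Uh A)ᵀ) * X) ≤ Matrix.trace (Xᵀ * X) := by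
  have h := (proj_psd A).conjTranspose_mul_mul_same X
  rw [Matrix.conjTranspose_eq_transpose_of_trivial] at h
  have h2 := trace_psd_nonneg h
  have hexp : Xᵀ * (1 - Uh A * (Uh A)ᵀ) * X = Xᵀ * X - Xᵀ * (Uh A * (Uh A)ᵀ) * X := by
    rw [Matrix.mul_sub, Matrix.mul_one, Matrix.sub_mul]
  rw [hexp, Matrix.trace_sub] at h2
  linarith

lemma prod_le (X : Matrix (Fin m) (Fin p) ℝ) (Y : Matrix (Fin n) (Fin p) ℝ) :
    nuclearNorm (X * Yᵀ) ≤ frobNorm X * frobNorm Y := by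
  set A := X * Yᵀ with hA
  have key : nuclearNorm A = ∑ q : Fin n × Fin p,
      ((Uh A)ᵀ * X) q.1 q.2 * (Yᵀ * P A) q.2 q.1 := by
    rw [← trace_Gd A]
    have h1 : (Gd A)ᵀ * A = P A * ((Uh A)ᵀ * X * (Yᵀ)) := by
      rw [Gd, hA]
      simp [Matrix.transpose_mul, Matrix.mul_assoc]
    rw [h1, Matrix.trace_mul_comm, Matrix.mul_assoc, Matrix.trace]
    rw [Fintype.sum_prod_type]
    apply Finset.sum_congr rfl
    intro i _
    simp [Matrix.diag, Matrix.mul_apply, Finset.mul_sum, mul_comm, mul_left_comm]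
  have cs : ∑ q : Fin n × Fin p, ((Uh A)ᵀ * X) q.1 q.2 * (Yᵀ * P A) q.2 q.1 ≤
      Real.sqrt (∑ q : Fin n × Fin p, (((Uh A)ᵀ * X) q.1 q.2) ^ 2) *
      Real.sqrt (∑ q : Fin n × Fin p, ((Yᵀ * P A) q.2 q.1) ^ 2) :=
    Real.sum_mul_le_sqrt_mul_sqrt _ _ _
  have hf : ∑ q : Fin n × Fin p, (((Uh A)ᵀ * X) q.1 q.2) ^ 2 ≤ frobNorm X ^ 2 := by
    rw [frob_sq]
    have e1 : ∑ q : Fin n × Fin p, (((Uh A)ᵀ * X) q.1 q.2) ^ 2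
        = Matrix.trace (Xᵀ * (Uh A * (Uh A)ᵀ) * X) := by
      rw [show Xᵀ * (Uh A * (Uh A)ᵀ) * X = ((Uh A)ᵀ * X)ᵀ * ((Uh A)ᵀ * X) by
        simp [Matrix.transpose_mul, Matrix.mul_assoc]]
      rw [trace_transpose_mul_self, Fintype.sum_prod_type, Finset.sum_comm]
    rw [e1]
    exact trace_proj_le A X
  have hg : ∑ q : Fin n × Fin p, ((Yᵀ * P A) q.2 q.1) ^ 2 = frobNorm Y ^ 2 := by
    rw [frob_sq]
    have e1 : ∑ q : Fin n × Fin p, ((Yᵀ * P A) q.2 q.1) ^ 2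
        = Matrix.trace ((Yᵀ * P A) * (Yᵀ * P A)ᵀ) := by
      rw [Matrix.trace_mul_comm, trace_transpose_mul_self, Fintype.sum_prod_type]
    rw [e1, show (Yᵀ * P A) * (Yᵀ * P A)ᵀ = Yᵀ * (P A * (P A)ᵀ) * Y by
      simp [Matrix.transpose_mul, Matrix.mul_assoc], PPt, Matrix.mul_one]
  have hgs : Real.sqrt (∑ q : Fin n × Fin p, ((Yᵀ * P A) q.2 q.1) ^ 2) = frobNorm Y := by
    rw [hg, Real.sqrt_sq (frob_nonneg Y)]
  have hfs : Real.sqrt (∑ q : Fin n × Fin p, (((Uh A)ᵀ * X) q.1 q.2) ^ 2) ≤ frobNorm X := by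
    calc Real.sqrt _ ≤ Real.sqrt (frobNorm X ^ 2) := Real.sqrt_le_sqrt hf
      _ = frobNorm X := Real.sqrt_sq (frob_nonneg X)
  calc nuclearNorm A ≤ _ := key.le
    _ ≤ _ := cs
    _ ≤ frobNorm X * frobNorm Y := by
        rw [hgs]
        exact mul_le_mul_of_nonneg_right hfs (frob_nonneg Y)

end X

namespace X
open NNaux
variable {m n p : ℕ}

lemma psd_one_sub_proj {k : ℕ} (Q : Matrix (Fin k) (Fin k) ℝ)
    (hsym : Qᵀ = Q) (hidem : Q * Q = Q) : ((1 : Matrix (Fin k) (Fin k) ℝ) - Q).PosSemidef := by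
  set S := (1 : Matrix (Fin k) (Fin k) ℝ) - Q with hS
  have hsymm : Sᵀ = S := by rw [hS]; simp [Matrix.transpose_sub, hsym]
  have hidem' : S * S = S := by
    rw [hS]
    simp only [Matrix.mul_sub, Matrix.sub_mul, Matrix.mul_one, Matrix.one_mul, hidem]
    abel
  have := Matrix.posSemidef_conjTranspose_mul_self S
  rw [Matrix.conjTranspose_eq_transpose_of_trivial, hsymm, hidem'] at this
  exact this

/-- if `B * V = 0` and `f` vanishes where `lam B` vanishes then `Vᵀ * (P B * diagonal f) = 0`. -/
lemma orth_aux {d2 r : ℕ} (B : Matrix (Fin m) (Fin d2) ℝ) (V : Matrix (Fin d2) (Fin r) ℝ)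
    (hBV : B * V = 0) (f : Fin d2 → ℝ) (hf : ∀ j, lam B j = 0 → f j = 0) :
    Vᵀ * (P B * Matrix.diagonal f) = 0 := by
  have h0 : Vᵀ * (Bᵀ * B) = 0 := by
    rw [show Vᵀ * (Bᵀ * B) = (B * V)ᵀ * B by simp [Matrix.transpose_mul, Matrix.mul_assoc],
      hBV]
    simp
  have h1 : Vᵀ * (P B * Matrix.diagonal (lam B)) = 0 := by
    rw [← spec' B, show Vᵀ * (Bᵀ * B * P B) = (Vᵀ * (Bᵀ * B)) * P B by
      simp [Matrix.mul_assoc], h0]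
    simp
  funext i j
  have he : (Vᵀ * (P B * Matrix.diagonal (lam B)))  i j = 0 := by rw [h1]; rfl
  rw [show P B * Matrix.diagonal (lam B) = (P B) * Matrix.diagonal (lam B) from rfl] at he
  have expand : ∀ g : Fin d2 → ℝ, (Vᵀ * (P B * Matrix.diagonal g)) i j
      = (Vᵀ * P B) i j * g j := by
    intro g
    rw [← Matrix.mul_assoc, Matrix.mul_diagonal]
  rw [expand] at he
  rw [show (0 : Matrix (Fin r) (Fin d2) ℝ) i j = 0 from rfl, expand]
  rcases eq_or_ne (lam B j) 0 with h | h
  · rw [hf j h, mul_zero]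
  · have : (Vᵀ * P B) i j = 0 := by
      rcases mul_eq_zero.mp he with h' | h'
      · exact h'
      · exact absurd h' h
    rw [this, zero_mul]

end X

open NNaux X

set_option maxHeartbeats 2000000

/-- Taylor expansion control of the nuclear norm with subdifferentiation. -/
theorem stmt1 {d1 d2 r : ℕ}
    (U : Matrix (Fin d1) (Fin r) ℝ) (V : Matrix (Fin d2) (Fin r) ℝ) (dv : Fin r → ℝ)
    (hU : Uᵀ * U = 1) (hV : Vᵀ * V = 1) (hdv : ∀ i, 0 < dv i)
    (Θ M : Matrix (Fin d1) (Fin d2) ℝ)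
    (hΘ : Θ = U * Matrix.diagonal dv * Vᵀ)
    (PT : Matrix (Fin d1) (Fin d2) ℝ → Matrix (Fin d1) (Fin d2) ℝ)
    (hPT : ∀ N, PT N = U * Uᵀ * N + N * (V * Vᵀ) - U * Uᵀ * N * (V * Vᵀ)) :
    0 ≤ nuclearNorm M - nuclearNorm Θ - nuclearNorm (M - PT M) - mip (U * Vᵀ) (M - Θ) ∧
      nuclearNorm M - nuclearNorm Θ - nuclearNorm (M - PT M) - mip (U * Vᵀ) (M - Θ)
        ≤ frobNorm ((PT M - Θ) * V * Matrix.diagonal (fun i => (Real.sqrt (dv i))⁻¹)) ^ 2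
          + frobNorm (Matrix.diagonal (fun i => (Real.sqrt (dv i))⁻¹) * Uᵀ * (PT M - Θ)) ^ 2 := by
  classical
  set B : Matrix (Fin d1) (Fin d2) ℝ := M - PT M with hBdef
  set Δ : Matrix (Fin d1) (Fin d2) ℝ := PT M - Θ with hΔdef
  -- basic orthogonality facts
  have hUB : Uᵀ * B = 0 := by
    rw [hBdef, hPT]
    simp only [Matrix.mul_sub, Matrix.mul_add, ← Matrix.mul_assoc, hU, Matrix.one_mul]
    abel
  have hBV : B * V = 0 := by
    rw [hBdef, hPT]
    simp only [Matrix.sub_mul, Matrix.add_mul, Matrix.mul_assoc, hV, Matrix.mul_one]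
    abel
  -- Θ is in the tangent space
  have hUUΘ : U * Uᵀ * Θ = Θ := by
    rw [hΘ, show U * Uᵀ * (U * Matrix.diagonal dv * Vᵀ)
        = U * (Uᵀ * U) * Matrix.diagonal dv * Vᵀ by simp [Matrix.mul_assoc], hU]
    simp [Matrix.mul_assoc]
  have hΘVV : Θ * (V * Vᵀ) = Θ := by
    rw [hΘ, show U * Matrix.diagonal dv * Vᵀ * (V * Vᵀ)
        = U * Matrix.diagonal dv * (Vᵀ * V) * Vᵀ by simp [Matrix.mul_assoc], hV]
    simp [Matrix.mul_assoc]
  -- PT is idempotent on M, and Δ lies in the tangent space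
  have hΔtang : U * Uᵀ * Δ + Δ * (V * Vᵀ) - U * Uᵀ * Δ * (V * Vᵀ) = Δ := by
    rw [hΔdef, hPT]
    simp only [Matrix.mul_sub, Matrix.sub_mul, Matrix.mul_add, Matrix.add_mul]
    simp only [← Matrix.mul_assoc]
    simp only [Matrix.mul_assoc, hV, Matrix.mul_one]
    simp only [← Matrix.mul_assoc, hU, Matrix.one_mul]
    simp only [Matrix.mul_assoc, hV, Matrix.mul_one]
    simp only [← Matrix.mul_assoc]
    rw [show U * Uᵀ * Θ = Θ from hUUΘ]
    have h2 : Θ * V * Vᵀ = Θ := by rw [Matrix.mul_assoc]; exact hΘVV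
    rw [h2]
    abel
  -- dual certificate for the lower bound
  set GB : Matrix (Fin d1) (Fin d2) ℝ := X.Gd B with hGBdef
  have hUUh : Uᵀ * Uh B = 0 := by
    rw [Uh, show Uᵀ * (B * P B * Matrix.diagonal fun i => (sig B i)⁻¹)
      = (Uᵀ * B) * (P B * Matrix.diagonal fun i => (sig B i)⁻¹) by simp [Matrix.mul_assoc],
      hUB, Matrix.zero_mul]
  have hUGB : Uᵀ * GB = 0 := by
    rw [hGBdef, Gd, ← Matrix.mul_assoc, hUUh, Matrix.zero_mul]
  have hGBtU : GBᵀ * U = 0 := by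
    have := congrArg Matrix.transpose hUGB
    simpa [Matrix.transpose_mul] using this
  have hsiginv : Vᵀ * (P B * Matrix.diagonal fun j => (sig B j)⁻¹) = 0 :=
    orth_aux B V hBV _ (fun j h => by simp [sig, h])
  have hGBV : GB * V = 0 := by
    have htr : (Matrix.diagonal fun j => (sig B j)⁻¹) * ((P B)ᵀ * V) = 0 := by
      have := congrArg Matrix.transpose hsiginv
      simpa [Matrix.transpose_mul, Matrix.diagonal_transpose, Matrix.mul_assoc] using this
    rw [hGBdef, Gd, Uh]
    calc B * P B * (Matrix.diagonal fun i => (sig B i)⁻¹) * (P B)ᵀ * V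
        = B * P B * ((Matrix.diagonal fun i => (sig B i)⁻¹) * ((P B)ᵀ * V)) := by
          simp [Matrix.mul_assoc]
      _ = 0 := by rw [htr, Matrix.mul_zero]
  have hVtGBt : Vᵀ * GBᵀ = 0 := by
    have := congrArg Matrix.transpose hGBV
    simpa [Matrix.transpose_mul] using this
  have hEV : Vᵀ * (P B * Matrix.diagonal (E B)) = 0 :=
    orth_aux B V hBV _ (fun j h => by simp [E, h])
  set G : Matrix (Fin d1) (Fin d2) ℝ := U * Vᵀ + GB with hGdef
  have hGtG : Gᵀ * G = V * Vᵀ + P B * Matrix.diagonal (E B) * (P B)ᵀ := by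
    rw [hGdef]
    have e1 : (U * Vᵀ + GB)ᵀ * (U * Vᵀ + GB)
        = V * (Uᵀ * U) * Vᵀ + V * (Uᵀ * GB) + (GBᵀ * U) * Vᵀ + GBᵀ * GB := by
      simp only [Matrix.transpose_add, Matrix.transpose_mul, Matrix.add_mul, Matrix.mul_add,
        Matrix.transpose_transpose, Matrix.mul_assoc]
      abel
    rw [e1, hU, hUGB, hGBtU, hGBdef, GdtGd]
    simp
  have hGpsd : ((1 : Matrix (Fin d2) (Fin d2) ℝ) - Gᵀ * G).PosSemidef := by
    rw [hGtG]
    apply psd_one_sub_proj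
    · simp [Matrix.transpose_add, Matrix.transpose_mul, Matrix.mul_assoc]
    · have hVV : V * Vᵀ * (V * Vᵀ) = V * Vᵀ := by
        rw [show V * Vᵀ * (V * Vᵀ) = V * (Vᵀ * V) * Vᵀ by simp [Matrix.mul_assoc], hV]
        simp
      have hcross : V * Vᵀ * (P B * Matrix.diagonal (E B) * (P B)ᵀ) = 0 := by
        rw [show V * Vᵀ * (P B * Matrix.diagonal (E B) * (P B)ᵀ)
          = V * (Vᵀ * (P B * Matrix.diagonal (E B))) * (P B)ᵀ by simp [Matrix.mul_assoc], hEV]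
        simp
      have hcross' : P B * Matrix.diagonal (E B) * (P B)ᵀ * (V * Vᵀ) = 0 := by
        have h1 : (V * Vᵀ)ᵀ = V * Vᵀ := by simp [Matrix.transpose_mul]
        have h2 : (P B * Matrix.diagonal (E B) * (P B)ᵀ)ᵀ
            = P B * Matrix.diagonal (E B) * (P B)ᵀ := by
          simp [Matrix.transpose_mul, Matrix.diagonal_transpose, Matrix.mul_assoc]
        have := congrArg Matrix.transpose hcross
        rw [Matrix.transpose_mul, h1, h2] at this
        simpa using this
      have hQ2 : P B * Matrix.diagonal (E B) * (P B)ᵀ * (P B * Matrix.diagonal (E B) * (P B)ᵀ)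
          = P B * Matrix.diagonal (E B) * (P B)ᵀ := by
        calc P B * Matrix.diagonal (E B) * (P B)ᵀ * (P B * Matrix.diagonal (E B) * (P B)ᵀ)
            = P B * Matrix.diagonal (E B) * ((P B)ᵀ * P B) * Matrix.diagonal (E B) * (P B)ᵀ := by
              simp [Matrix.mul_assoc]
          _ = P B * (Matrix.diagonal (E B) * Matrix.diagonal (E B)) * (P B)ᵀ := by
              rw [PtP]; simp [Matrix.mul_assoc]
          _ = _ := by
              rw [Matrix.diagonal_mul_diagonal,
                show (fun i => E B i * E B i) = E B from funext fun i => by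
                  unfold E; rcases eq_or_ne (lam B i) 0 with h | h <;> simp [h]]
      rw [Matrix.add_mul, Matrix.mul_add, Matrix.mul_add, hVV, hcross, hcross', hQ2]
      abel
  -- trace identities
  have hMsplit : PT M + B = M := by rw [hBdef]; abel
  have htraceGB_PT : Matrix.trace (GBᵀ * PT M) = 0 := by
    rw [hPT]
    have t1 : GBᵀ * (U * Uᵀ * M) = 0 := by
      rw [show GBᵀ * (U * Uᵀ * M) = (GBᵀ * U) * (Uᵀ * M) by simp [Matrix.mul_assoc], hGBtU,
        Matrix.zero_mul]
    have t3 : GBᵀ * (U * Uᵀ * M * (V * Vᵀ)) = 0 := by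
      rw [show GBᵀ * (U * Uᵀ * M * (V * Vᵀ)) = (GBᵀ * U) * (Uᵀ * M * (V * Vᵀ)) by
        simp [Matrix.mul_assoc], hGBtU, Matrix.zero_mul]
    have t2 : Matrix.trace (GBᵀ * (M * (V * Vᵀ))) = 0 := by
      rw [show GBᵀ * (M * (V * Vᵀ)) = (GBᵀ * M * V) * Vᵀ by simp [Matrix.mul_assoc],
        Matrix.trace_mul_comm,
        show Vᵀ * (GBᵀ * M * V) = ((Vᵀ * GBᵀ) * M) * V by simp [Matrix.mul_assoc], hVtGBt]
      simp
    rw [Matrix.mul_sub, Matrix.mul_add, Matrix.trace_sub, Matrix.trace_add, t1, t3, t2]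
    simp
  have htraceG : Matrix.trace (Gᵀ * M) = mip (U * Vᵀ) M + nuclearNorm B := by
    have hsplit : Gᵀ * M = (U * Vᵀ)ᵀ * M + GBᵀ * M := by
      rw [hGdef, Matrix.transpose_add, Matrix.add_mul]
    have hGBM : Matrix.trace (GBᵀ * M) = nuclearNorm B := by
      conv_lhs => rw [← hMsplit]
      rw [Matrix.mul_add, Matrix.trace_add, htraceGB_PT, zero_add, hGBdef, trace_Gd]
    rw [hsplit, Matrix.trace_add, hGBM, mip]
  -- mip computations
  have hmipΘ : mip (U * Vᵀ) Θ = ∑ i, dv i := by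
    rw [mip, hΘ]
    rw [show (U * Vᵀ)ᵀ * (U * Matrix.diagonal dv * Vᵀ)
        = V * ((Uᵀ * U) * (Matrix.diagonal dv * Vᵀ)) by
      simp [Matrix.transpose_mul, Matrix.mul_assoc], hU, Matrix.one_mul,
      Matrix.trace_mul_comm,
      show Matrix.diagonal dv * Vᵀ * V = Matrix.diagonal dv * (Vᵀ * V) by
        simp [Matrix.mul_assoc], hV, Matrix.mul_one, Matrix.trace_diagonal]
  have hmipsplit : mip (U * Vᵀ) M = mip (U * Vᵀ) Θ + mip (U * Vᵀ) (M - Θ) := by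
    simp only [mip, Matrix.mul_sub, Matrix.trace_sub]
    ring
  have hsumdv : (0:ℝ) ≤ ∑ i, dv i := Finset.sum_nonneg fun i _ => (hdv i).le
  set sq : Fin r → ℝ := fun i => Real.sqrt (dv i) with hsqdef
  have hss : ∀ i, sq i * sq i = dv i := fun i => Real.mul_self_sqrt (hdv i).le
  have hdiagsq : Matrix.diagonal sq * Matrix.diagonal sq = Matrix.diagonal dv := by
    rw [Matrix.diagonal_mul_diagonal]
    exact congrArg _ (funext hss)
  have hΘle : nuclearNorm Θ ≤ ∑ i, dv i := by
    have hfactΘ : Θ = (U * Matrix.diagonal sq) * (V * Matrix.diagonal sq)ᵀ := by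
      rw [hΘ, Matrix.transpose_mul, Matrix.diagonal_transpose,
        show U * Matrix.diagonal sq * (Matrix.diagonal sq * Vᵀ)
          = U * (Matrix.diagonal sq * Matrix.diagonal sq) * Vᵀ by
            simp only [Matrix.mul_assoc],
        hdiagsq]
    have hfrobU : frobNorm (U * Matrix.diagonal sq) = Real.sqrt (∑ i, dv i) := by
      rw [frobNorm]
      congr 1
      rw [Matrix.transpose_mul, Matrix.diagonal_transpose,
        show Matrix.diagonal sq * Uᵀ * (U * Matrix.diagonal sq)
          = Matrix.diagonal sq * (Uᵀ * U) * Matrix.diagonal sq by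
            simp only [Matrix.mul_assoc],
        hU, Matrix.mul_one, hdiagsq, Matrix.trace_diagonal]
    have hfrobV : frobNorm (V * Matrix.diagonal sq) = Real.sqrt (∑ i, dv i) := by
      rw [frobNorm]
      congr 1
      rw [Matrix.transpose_mul, Matrix.diagonal_transpose,
        show Matrix.diagonal sq * Vᵀ * (V * Matrix.diagonal sq)
          = Matrix.diagonal sq * (Vᵀ * V) * Matrix.diagonal sq by
            simp only [Matrix.mul_assoc],
        hV, Matrix.mul_one, hdiagsq, Matrix.trace_diagonal]
    have hp := prod_le (U * Matrix.diagonal sq) (V * Matrix.diagonal sq)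
    rw [← hfactΘ, hfrobU, hfrobV, Real.mul_self_sqrt hsumdv] at hp
    exact hp
  have hΘge : (∑ i, dv i) ≤ nuclearNorm Θ := by
    have hUVpsd : ((1 : Matrix (Fin d2) (Fin d2) ℝ) - (U * Vᵀ)ᵀ * (U * Vᵀ)).PosSemidef := by
      have hQ : (U * Vᵀ)ᵀ * (U * Vᵀ) = V * Vᵀ := by
        rw [Matrix.transpose_mul, Matrix.transpose_transpose,
          show V * Uᵀ * (U * Vᵀ) = V * (Uᵀ * U) * Vᵀ by simp [Matrix.mul_assoc], hU]
        simp
      rw [hQ]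
      refine psd_one_sub_proj _ (by simp [Matrix.transpose_mul]) ?_
      rw [show V * Vᵀ * (V * Vᵀ) = V * (Vᵀ * V) * Vᵀ by simp [Matrix.mul_assoc], hV]
      simp
    have hd := dual_le' Θ (U * Vᵀ) hUVpsd
    rw [show Matrix.trace ((U * Vᵀ)ᵀ * Θ) = mip (U * Vᵀ) Θ from rfl, hmipΘ] at hd
    exact hd
  have hlow : mip (U * Vᵀ) M + nuclearNorm B ≤ nuclearNorm M := by
    have hd := dual_le' M G hGpsd
    linarith [htraceG]
  constructor
  · have h1 : nuclearNorm Θ ≤ mip (U * Vᵀ) Θ := by rw [hmipΘ]; exact hΘle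
    linarith [hlow, hmipsplit, h1]
  -- upper bound
  set w : Fin r → ℝ := fun i => (Real.sqrt (dv i))⁻¹ with hwdef
  have hws : Matrix.diagonal w * Matrix.diagonal sq = 1 := by
    rw [Matrix.diagonal_mul_diagonal, ← Matrix.diagonal_one]
    refine congrArg _ (funext fun i => ?_)
    have : Real.sqrt (dv i) ≠ 0 := ne_of_gt (Real.sqrt_pos.mpr (hdv i))
    simp [hwdef, hsqdef, inv_mul_cancel₀ this]
  have hsw : Matrix.diagonal sq * Matrix.diagonal w = 1 := by
    rw [Matrix.diagonal_mul_diagonal, ← Matrix.diagonal_one]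
    refine congrArg _ (funext fun i => ?_)
    have : Real.sqrt (dv i) ≠ 0 := ne_of_gt (Real.sqrt_pos.mpr (hdv i))
    simp [hwdef, hsqdef, mul_inv_cancel₀ this]
  set R : Matrix (Fin r) (Fin d2) ℝ := Uᵀ * Δ with hRdef
  set C : Matrix (Fin d1) (Fin r) ℝ := Δ * V - U * (R * V) with hCdef
  have hUC : Uᵀ * C = 0 := by
    rw [hCdef, Matrix.mul_sub, show Uᵀ * (U * (R * V)) = (Uᵀ * U) * (R * V) by
      simp [Matrix.mul_assoc], hU, Matrix.one_mul, hRdef, Matrix.mul_assoc, sub_self]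
  have hCtU : Cᵀ * U = 0 := by
    have := congrArg Matrix.transpose hUC
    simpa [Matrix.transpose_mul] using this
  have hΔdecomp : U * R + C * Vᵀ = Δ := by
    rw [hCdef, hRdef]
    calc U * (Uᵀ * Δ) + (Δ * V - U * (Uᵀ * Δ * V)) * Vᵀ
        = U * Uᵀ * Δ + Δ * (V * Vᵀ) - U * Uᵀ * Δ * (V * Vᵀ) := by
          simp only [Matrix.sub_mul, Matrix.mul_assoc]
          abel
      _ = Δ := hΔtang
  set N1 : Matrix (Fin d1) (Fin r) ℝ := C * Matrix.diagonal w with hN1def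
  set N2 : Matrix (Fin r) (Fin d2) ℝ := Matrix.diagonal w * R with hN2def
  set Xf : Matrix (Fin d1) (Fin r) ℝ := U * Matrix.diagonal sq + C * Matrix.diagonal w
    with hXfdef
  set Yf : Matrix (Fin d2) (Fin r) ℝ := V * Matrix.diagonal sq + Rᵀ * Matrix.diagonal w
    with hYfdef
  have hYft : Yfᵀ = Matrix.diagonal sq * Vᵀ + Matrix.diagonal w * R := by
    rw [hYfdef]
    simp [Matrix.transpose_add, Matrix.transpose_mul, Matrix.diagonal_transpose]
  have hfact : Xf * Yfᵀ = Θ + Δ + N1 * N2 := by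
    rw [hXfdef, hYft]
    have expand : (U * Matrix.diagonal sq + C * Matrix.diagonal w) *
        (Matrix.diagonal sq * Vᵀ + Matrix.diagonal w * R)
        = U * (Matrix.diagonal sq * Matrix.diagonal sq) * Vᵀ
          + U * (Matrix.diagonal sq * Matrix.diagonal w) * R
          + C * (Matrix.diagonal w * Matrix.diagonal sq) * Vᵀ
          + (C * Matrix.diagonal w) * (Matrix.diagonal w * R) := by
      simp only [Matrix.add_mul, Matrix.mul_add, Matrix.mul_assoc]
      abel
    rw [expand, hdiagsq, hsw, hws, Matrix.mul_one, Matrix.mul_one, ← hΘ, ← hN1def, ← hN2def]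
    rw [show Θ + U * R + C * Vᵀ + N1 * N2 = Θ + (U * R + C * Vᵀ) + N1 * N2 by abel, hΔdecomp]
  have hfrobN1neg : frobNorm (-N1) = frobNorm N1 := by
    unfold frobNorm
    rw [Matrix.transpose_neg, Matrix.neg_mul, Matrix.mul_neg, neg_neg]
  have htri : nuclearNorm (Θ + Δ) ≤ frobNorm Xf * frobNorm Yf + frobNorm N1 * frobNorm N2 := by
    have hsum : Θ + Δ = Xf * Yfᵀ + (-N1) * N2 := by
      rw [hfact, Matrix.neg_mul]
      abel
    calc nuclearNorm (Θ + Δ) = nuclearNorm (Xf * Yfᵀ + (-N1) * N2) := by rw [hsum]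
      _ ≤ nuclearNorm (Xf * Yfᵀ) + nuclearNorm ((-N1) * N2) := nuclear_triangle _ _
      _ ≤ frobNorm Xf * frobNorm Yf + frobNorm N1 * frobNorm N2 := by
          have h1 := prod_le Xf Yf
          have h2 := prod_le (-N1) (N2ᵀ)
          rw [Matrix.transpose_transpose, hfrobN1neg, frob_transpose] at h2
          linarith
  have hXfsq : frobNorm Xf ^ 2 = (∑ i, dv i) + frobNorm N1 ^ 2 := by
    rw [frob_sq, frob_sq, hXfdef]
    have expand : (U * Matrix.diagonal sq + C * Matrix.diagonal w)ᵀ *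
        (U * Matrix.diagonal sq + C * Matrix.diagonal w)
        = Matrix.diagonal sq * (Uᵀ * U) * Matrix.diagonal sq
          + Matrix.diagonal sq * (Uᵀ * C) * Matrix.diagonal w
          + Matrix.diagonal w * (Cᵀ * U) * Matrix.diagonal sq
          + (C * Matrix.diagonal w)ᵀ * (C * Matrix.diagonal w) := by
      simp only [Matrix.transpose_add, Matrix.transpose_mul, Matrix.diagonal_transpose,
        Matrix.add_mul, Matrix.mul_add, Matrix.mul_assoc]
      abel
    rw [expand, hU, hUC, hCtU, Matrix.mul_one, hdiagsq]
    simp only [Matrix.mul_zero, Matrix.zero_mul, Matrix.trace_add, Matrix.trace_zero,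
      Matrix.trace_diagonal]
    ring
  have hmipΔtr : mip (U * Vᵀ) Δ = Matrix.trace (R * V) := by
    rw [mip, hRdef,
      show (U * Vᵀ)ᵀ * Δ = V * (Uᵀ * Δ) by simp [Matrix.transpose_mul, Matrix.mul_assoc],
      Matrix.trace_mul_comm]
  have hYfsq : frobNorm Yf ^ 2 = (∑ i, dv i) + 2 * mip (U * Vᵀ) Δ + frobNorm N2 ^ 2 := by
    rw [frob_sq, frob_sq, hYfdef]
    have expand : (V * Matrix.diagonal sq + Rᵀ * Matrix.diagonal w)ᵀ *
        (V * Matrix.diagonal sq + Rᵀ * Matrix.diagonal w)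
        = Matrix.diagonal sq * (Vᵀ * V) * Matrix.diagonal sq
          + Matrix.diagonal sq * (Vᵀ * Rᵀ) * Matrix.diagonal w
          + Matrix.diagonal w * (R * V) * Matrix.diagonal sq
          + (Matrix.diagonal w * R) * (Rᵀ * Matrix.diagonal w) := by
      simp only [Matrix.transpose_add, Matrix.transpose_mul, Matrix.diagonal_transpose,
        Matrix.transpose_transpose, Matrix.add_mul, Matrix.mul_add, Matrix.mul_assoc]
      abel
    rw [expand, hV, Matrix.mul_one, hdiagsq]
    simp only [Matrix.trace_add, Matrix.trace_diagonal]
    have t2 : Matrix.trace (Matrix.diagonal sq * (Vᵀ * Rᵀ) * Matrix.diagonal w)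
        = Matrix.trace (R * V) := by
      rw [Matrix.trace_mul_comm, ← Matrix.mul_assoc, hws, Matrix.one_mul, ← Matrix.transpose_mul,
        Matrix.trace_transpose]
    have t3 : Matrix.trace (Matrix.diagonal w * (R * V) * Matrix.diagonal sq)
        = Matrix.trace (R * V) := by
      rw [Matrix.trace_mul_comm, ← Matrix.mul_assoc, hsw, Matrix.one_mul]
    have t4 : Matrix.trace ((Matrix.diagonal w * R) * (Rᵀ * Matrix.diagonal w))
        = Matrix.trace ((Matrix.diagonal w * R)ᵀ * (Matrix.diagonal w * R)) := by
      rw [Matrix.trace_mul_comm]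
      congr 1
      simp [Matrix.transpose_mul, Matrix.diagonal_transpose, Matrix.mul_assoc]
    rw [t2, t3, t4, hmipΔtr, hN2def]
    ring
  have habmean : ∀ a b : ℝ, 0 ≤ a → 0 ≤ b → a * b ≤ (a ^ 2 + b ^ 2) / 2 := by
    intro a b _ _
    have h := sq_nonneg (a - b)
    have hexp : (a - b) ^ 2 = a ^ 2 - 2 * (a * b) + b ^ 2 := by ring
    linarith
  have hquad : nuclearNorm (Θ + Δ) ≤
      (∑ i, dv i) + mip (U * Vᵀ) Δ + frobNorm N1 ^ 2 + frobNorm N2 ^ 2 := by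
    have h1 := habmean (frobNorm Xf) (frobNorm Yf) (frob_nonneg _) (frob_nonneg _)
    have h2 := habmean (frobNorm N1) (frobNorm N2) (frob_nonneg _) (frob_nonneg _)
    rw [hXfsq, hYfsq] at h1
    linarith [htri]
  have hN1le : frobNorm N1 ^ 2 ≤ frobNorm (Δ * V * Matrix.diagonal w) ^ 2 := by
    have hΔV : Δ * V = U * (R * V) + C := by
      rw [← hΔdecomp, Matrix.add_mul,
        show C * Vᵀ * V = C * (Vᵀ * V) by simp [Matrix.mul_assoc], hV, Matrix.mul_one,
        Matrix.mul_assoc]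
    have hsplit : Δ * V * Matrix.diagonal w = U * (R * V * Matrix.diagonal w) + N1 := by
      rw [hΔV, Matrix.add_mul, hN1def]
      simp only [Matrix.mul_assoc]
    have hUN1 : Uᵀ * N1 = 0 := by
      rw [hN1def, ← Matrix.mul_assoc, hUC, Matrix.zero_mul]
    have hN1tU : N1ᵀ * U = 0 := by
      have := congrArg Matrix.transpose hUN1
      simpa [Matrix.transpose_mul] using this
    rw [frob_sq, frob_sq, hsplit]
    have expand : (U * (R * V * Matrix.diagonal w) + N1)ᵀ * (U * (R * V * Matrix.diagonal w) + N1)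
        = (R * V * Matrix.diagonal w)ᵀ * ((Uᵀ * U) * (R * V * Matrix.diagonal w))
          + (R * V * Matrix.diagonal w)ᵀ * (Uᵀ * N1)
          + (N1ᵀ * U) * (R * V * Matrix.diagonal w) + N1ᵀ * N1 := by
      simp only [Matrix.transpose_add, Matrix.transpose_mul, Matrix.add_mul, Matrix.mul_add,
        Matrix.mul_assoc]
      abel
    rw [expand, hU, hUN1, hN1tU, Matrix.one_mul]
    simp only [Matrix.mul_zero, Matrix.zero_mul, Matrix.trace_add, Matrix.trace_zero]
    have hnn := trace_transpose_mul_self_nonneg (R * V * Matrix.diagonal w)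
    linarith
  have hN2eq : Matrix.diagonal w * Uᵀ * Δ = N2 := by
    rw [hN2def, hRdef, Matrix.mul_assoc]
  have hPTM : PT M = Θ + Δ := by rw [hΔdef]; abel
  have hMle : nuclearNorm M ≤ nuclearNorm (Θ + Δ) + nuclearNorm B := by
    calc nuclearNorm M = nuclearNorm (Θ + Δ + B) := by rw [← hPTM, hMsplit]
      _ ≤ _ := nuclear_triangle _ _
  have hmipB : mip (U * Vᵀ) B = 0 := by
    rw [mip, show (U * Vᵀ)ᵀ * B = V * (Uᵀ * B) by
      simp [Matrix.transpose_mul, Matrix.mul_assoc], hUB, Matrix.mul_zero, Matrix.trace_zero]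
  have hmipMΘ : mip (U * Vᵀ) (M - Θ) = mip (U * Vᵀ) Δ + mip (U * Vᵀ) B := by
    have hMΘ : M - Θ = Δ + B := by rw [hΔdef, hBdef]; abel
    rw [mip, hMΘ, Matrix.mul_add, Matrix.trace_add, mip, mip]
  have hgoal2 : frobNorm (Matrix.diagonal w * Uᵀ * Δ) ^ 2 = frobNorm N2 ^ 2 := by rw [hN2eq]
  rw [hgoal2]
  linarith [hMle, hquad, hΘge, hmipMΘ, hmipB, hN1le]
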